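/- arXiv:1606.02660 — 2 statements merged into one kernel-verified Lean document; each statement's English description precedes it below -/
import Mathlib

section
/- The number of independent sets in the lex graph L(n,k,w) equals 2^(n-k-1) + 2^(n-k-w-1) + k. -/
/-- Number of homomorphisms from a simple graph `G` to a graph-with-loops given
by an adjacency relation `H`. -/
noncomputable def homCount {V W : Type*} (G : SimpleGraph V) (H : W → W → Prop) : ℕ :=
  Nat.card {f : V → W // ∀ a b, G.Adj a b → H (f a) (f b)}

/-- Number of independent sets of a simple graph (including the empty set). -/
noncomputable def indCount {V : Type*} (G : SimpleGraph V) : ℕ :=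
  Nat.card {s : Finset V // ∀ a ∈ s, ∀ b ∈ s, ¬ G.Adj a b}

/-- Number of edges of a simple graph. -/
noncomputable def edgeCount {V : Type*} (G : SimpleGraph V) : ℕ := Nat.card G.edgeSet

/-- The lex graph `L(n,m)`: edges are the first `m` pairs in lexicographic order. -/
def lexGraph (n m : ℕ) : SimpleGraph (Fin n) where
  Adj a b := a ≠ b ∧
    (min a.val b.val) * (n - 1) - (min a.val b.val) * ((min a.val b.val) - 1) / 2
      + (max a.val b.val - min a.val b.val - 1) < m
  symm := by
    constructor
    intro a b h
    obtain ⟨h1, h2⟩ := h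
    refine ⟨h1.symm, ?_⟩
    rwa [min_comm, max_comm]
  loopless := by constructor; intro a h; exact h.1 rfl

/-- Disjoint union of a graph with `r` isolated vertices. -/
def addIsolates {V : Type*} (G : SimpleGraph V) (r : ℕ) : SimpleGraph (V ⊕ Fin r) where
  Adj x y := ∃ a b, x = Sum.inl a ∧ y = Sum.inl b ∧ G.Adj a b
  symm := by constructor; rintro x y ⟨a, b, rfl, rfl, h⟩; exact ⟨b, a, rfl, rfl, h.symm⟩
  loopless := by
    constructor
    rintro x ⟨a, b, rfl, h1, h2⟩
    cases Sum.inl.inj h1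
    exact G.irrefl h2

/-- The graph `J` (loop-threshold code 010): vertex 0 is isolated, vertex 1 is
unlooped and adjacent to vertex 2, which is looped. -/
def Jrel : Fin 3 → Fin 3 → Prop := fun x y =>
  (x = 1 ∧ y = 2) ∨ (x = 2 ∧ y = 1) ∨ (x = 2 ∧ y = 2)

open Classical in
/-- The independence polynomial of a graph. -/
noncomputable def indPoly {V : Type*} [Fintype V] (G : SimpleGraph V) (x : ℝ) : ℝ :=
  ∑ s ∈ Finset.univ.filter (fun s : Finset V => ∀ a ∈ s, ∀ b ∈ s, ¬ G.Adj a b), x ^ s.card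

/-- The lex graph `L(n,k,w)`: a clique on the first `k` vertices, each dominating,
together with a star with `w` edges centered at vertex `k` inside the remaining
independent part. -/
def lexKW (n k w : ℕ) : SimpleGraph (Fin n) where
  Adj a b := a ≠ b ∧ (a.val < k ∨ b.val < k ∨
    (a.val = k ∧ b.val ≤ k + w) ∨ (b.val = k ∧ a.val ≤ k + w))
  symm := by constructor; intro a b h; obtain ⟨h1, h2⟩ := h; exact ⟨h1.symm, by tauto⟩
  loopless := by constructor; intro a h; exact h.1 rfl


open Finset in
lemma auxCardLt (n m : ℕ) (h : m ≤ n) :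
    ((Finset.univ : Finset (Fin n)).filter (fun v => v.val < m)).card = m := by
  classical
  have : ((Finset.univ : Finset (Fin n)).filter (fun v => v.val < m))
      = (Finset.univ : Finset (Fin m)).map (Fin.castLEEmb h) := by
    ext v
    simp only [mem_filter, mem_univ, true_and, mem_map, Fin.castLEEmb, Function.Embedding.coeFn_mk]
    constructor
    · intro hv; exact ⟨⟨v.val, hv⟩, by ext; simp [Fin.castLE]⟩
    · rintro ⟨a, rfl⟩; exact a.isLt
  rw [this, Finset.card_map, Finset.card_univ, Fintype.card_fin]

open Finset in
lemma auxCardGt (n c : ℕ) (h : c < n) :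
    ((Finset.univ : Finset (Fin n)).filter (fun v => c < v.val)).card = n - (c + 1) := by
  classical
  have h1 := auxCardLt n (c + 1) h
  have h2 := Finset.card_filter_add_card_filter_not
    (s := (Finset.univ : Finset (Fin n))) (p := fun v : Fin n => v.val < c + 1)
  have h3 : ((Finset.univ : Finset (Fin n)).filter (fun v => ¬ (v.val < c + 1)))
      = ((Finset.univ : Finset (Fin n)).filter (fun v => c < v.val)) := by
    apply Finset.filter_congr; intro v _; simp
  rw [h1, h3, Finset.card_univ, Fintype.card_fin] at h2
  omega

/-- The number of independent sets in the lex graph `L(n,k,w)` equals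
`2^(n-k-1) + 2^(n-k-w-1) + k`. -/
theorem indCount_lexKW (n k w : ℕ) (hk : 1 ≤ k) (hw : w + k + 2 ≤ n) :
    indCount (lexKW n k w) = 2 ^ (n - k - 1) + 2 ^ (n - k - w - 1) + k := by
  classical
  have hkn : k < n := by omega
  have h1 : indCount (lexKW n k w) = (Finset.univ.filter
      (fun s : Finset (Fin n) => ∀ a ∈ s, ∀ b ∈ s, ¬ (lexKW n k w).Adj a b)).card := by
    rw [indCount, Nat.card_eq_fintype_card, Fintype.card_subtype]
  rw [h1]
  set vk : Fin n := ⟨k, hkn⟩ with hvk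
  have hadj : ∀ a b : Fin n, (lexKW n k w).Adj a b ↔ a ≠ b ∧ (a.val < k ∨ b.val < k ∨
      (a.val = k ∧ b.val ≤ k + w) ∨ (b.val = k ∧ a.val ≤ k + w)) := fun a b => Iff.rfl
  set A : Finset (Finset (Fin n)) :=
    (Finset.univ.filter (fun v : Fin n => v.val < k)).image (fun v => {v}) with hA
  set B : Finset (Finset (Fin n)) :=
    (Finset.univ.filter (fun v : Fin n => k + w < v.val)).powerset.image (insert vk) with hB
  set C : Finset (Finset (Fin n)) :=
    (Finset.univ.filter (fun v : Fin n => k < v.val)).powerset with hC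
  have hvkval : (vk : Fin n).val = k := rfl
  have key : Finset.univ.filter
      (fun s : Finset (Fin n) => ∀ a ∈ s, ∀ b ∈ s, ¬ (lexKW n k w).Adj a b) = A ∪ B ∪ C := by
    ext s
    simp only [Finset.mem_filter, Finset.mem_univ, true_and, Finset.mem_union, hA, hB, hC,
      Finset.mem_image, Finset.mem_powerset, Finset.le_iff_subset]
    constructor
    · intro hs
      by_cases hlow : ∃ v ∈ s, v.val < k
      · obtain ⟨v, hv, hvlt⟩ := hlow
        left; left
        have hseq : s = {v} := by
          ext u
          simp only [Finset.mem_singleton]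
          constructor
          · intro hu
            by_contra hne
            exact hs v hv u hu ((hadj v u).2 ⟨fun h => hne h.symm, Or.inl hvlt⟩)
          · rintro rfl; exact hv
        exact ⟨v, hvlt, hseq.symm⟩
      · push_neg at hlow
        by_cases hks : vk ∈ s
        · left; right
          refine ⟨s.erase vk, ?_, Finset.insert_erase hks⟩
          intro u hu
          have hune : u ≠ vk := Finset.ne_of_mem_erase hu
          have hus : u ∈ s := Finset.mem_of_mem_erase hu
          have h1 := hlow u hus
          have h2 : ¬ (lexKW n k w).Adj vk u := hs vk hks u hus
          rw [hadj] at h2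
          push_neg at h2
          have hne : vk ≠ u := fun h => hune h.symm
          have h3 := h2 hne
          simp only [Finset.mem_filter, Finset.mem_univ, true_and]
          omega
        · right
          intro u hu
          have h1 := hlow u hu
          have h2 : u ≠ vk := fun h => hks (h ▸ hu)
          have h3 : u.val ≠ k := fun h => h2 (Fin.ext (by rw [h, hvkval]))
          simp only [Finset.mem_filter, Finset.mem_univ, true_and]
          omega
    · rintro ((⟨v, hv, rfl⟩ | ⟨t, ht, rfl⟩) | hsub)
      · intro a ha b hb
        rw [Finset.mem_singleton] at ha hb
        subst ha; subst hb
        rw [hadj]; rintro ⟨hne, -⟩; exact hne rfl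
      · have htval : ∀ u ∈ t, k + w < u.val := by
          intro u hu
          have := ht hu
          simpa using this
        intro a ha b hb
        rw [Finset.mem_insert] at ha hb
        rw [hadj]
        rintro ⟨hne, hor⟩
        rcases ha with rfl | ha <;> rcases hb with rfl | hb
        · exact hne rfl
        · have := htval b hb; omega
        · have := htval a ha; omega
        · have h1 := htval a ha; have h2 := htval b hb
          omega
      · intro a ha b hb
        have h1 : k < a.val := by have := hsub ha; simpa using this
        have h2 : k < b.val := by have := hsub hb; simpa using this
        rw [hadj]
        rintro ⟨-, hor⟩
        omega
  rw [key]
  have hvkB : ∀ t ∈ (Finset.univ.filter (fun v : Fin n => k + w < v.val)).powerset, vk ∉ t := by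
    intro t ht hmem
    have := Finset.mem_powerset.1 ht hmem
    simp only [Finset.mem_filter, Finset.mem_univ, true_and, hvkval] at this
    omega
  have hdisjBC : Disjoint B C := by
    rw [Finset.disjoint_left]
    rintro s hsB hsC
    simp only [hB, Finset.mem_image, Finset.mem_powerset] at hsB
    obtain ⟨t, ht, rfl⟩ := hsB
    simp only [hC, Finset.mem_powerset] at hsC
    have := hsC (Finset.mem_insert_self vk t)
    simp only [Finset.mem_filter, Finset.mem_univ, true_and, hvkval] at this
    omega
  have hdisjA : Disjoint A (B ∪ C) := by
    rw [Finset.disjoint_left]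
    rintro s hsA hsBC
    simp only [hA, Finset.mem_image, Finset.mem_filter, Finset.mem_univ, true_and] at hsA
    obtain ⟨v, hv, rfl⟩ := hsA
    rw [Finset.mem_union] at hsBC
    rcases hsBC with hsB | hsC
    · simp only [hB, Finset.mem_image, Finset.mem_powerset] at hsB
      obtain ⟨t, ht, hins⟩ := hsB
      have : vk ∈ ({v} : Finset (Fin n)) := hins ▸ Finset.mem_insert_self vk t
      rw [Finset.mem_singleton] at this
      rw [← this] at hv
      omega
    · simp only [hC, Finset.mem_powerset] at hsC
      have := hsC (Finset.mem_singleton_self v)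
      simp only [Finset.mem_filter, Finset.mem_univ, true_and] at this
      omega
  rw [Finset.union_assoc, Finset.card_union_of_disjoint hdisjA,
    Finset.card_union_of_disjoint hdisjBC]
  have hAcard : A.card = k := by
    rw [hA, Finset.card_image_of_injective _ Finset.singleton_injective]
    exact auxCardLt n k (by omega)
  have hBcard : B.card = 2 ^ (n - k - w - 1) := by
    rw [hB, Finset.card_image_of_injOn, Finset.card_powerset,
      auxCardGt n (k + w) (by omega)]
    · congr 1 <;> omega
    · intro s hs t ht hst
      have h1 := hvkB s hs
      have h2 := hvkB t ht
      rw [← Finset.erase_insert h1, ← Finset.erase_insert h2, hst]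
  have hCcard : C.card = 2 ^ (n - k - 1) := by
    rw [hC, Finset.card_powerset, auxCardGt n k (by omega)]
    congr 1 <;> omega
  rw [hAcard, hBcard, hCcard]
  ring
end

section
/- For all integers n, k, w with k ≥ 1 and 1 ≤ w ≤ n-k-2, we have 3·(2^(n-k-2) + 2^(n-2k-w-2) + k) > 2^(n-k-1) + 2^(n-k-w-1) + k. -/
/-- Subcase 1a of the main theorem:
`3·(2^(n-k-2) + 2^(n-2k-w-2) + k) > 2^(n-k-1) + 2^(n-k-w-1) + k`. -/
theorem subcase_1a (n k w : ℤ) (hk : 1 ≤ k) (hw : 1 ≤ w) (hw2 : w ≤ n - k - 2) :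
    (2 : ℝ) ^ (n - k - 1) + 2 ^ (n - k - w - 1) + k
      < 3 * ((2 : ℝ) ^ (n - k - 2) + 2 ^ (n - 2 * k - w - 2) + k) := by
  have h0 : (2 : ℝ) ^ (n - k - 1) = 2 ^ (n - k - 2) * 2 := by
    rw [← zpow_add_one₀ (by norm_num : (2:ℝ) ≠ 0)]
    ring_nf
  have h1 : (2 : ℝ) ^ (n - k - w - 1) ≤ 2 ^ (n - k - 2) :=
    zpow_le_zpow_right₀ (by norm_num) (by linarith)
  have h2 : (0 : ℝ) < 2 ^ (n - 2 * k - w - 2) := by positivity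
  have h3 : (1 : ℝ) ≤ (k : ℝ) := by exact_mod_cast hk
  linarith
end
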